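/- Let P(q) = ∑_{j=0}^n q^j a_j be a quaternionic polynomial and let P^s(q) = ∑_{m=0}^{2n} q^m c_m be its symmetrization, where c_m = ∑_{k=0}^{m} a_k · conj(a_{m-k}) (with a_j = 0 for j > n). Then for every R > 0, max_{|q| = R} |P^s(q)| ≤ ( max_{|q| = R} |P(q)| )². -/

import Mathlib

open Quaternion Finset Polynomial

noncomputable section SymmAux

lemma symmAux_pure_of_sq_neg_one {I : ℍ[ℝ]} (hI : I * I = -1) :
    I.re = 0 ∧ I.imI ^ 2 + I.imJ ^ 2 + I.imK ^ 2 = 1 := by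
  have h1 : (I * I).re = (-1 : ℍ[ℝ]).re := by rw [hI]
  have h2 : (I * I).imI = (-1 : ℍ[ℝ]).imI := by rw [hI]
  have h3 : (I * I).imJ = (-1 : ℍ[ℝ]).imJ := by rw [hI]
  have h4 : (I * I).imK = (-1 : ℍ[ℝ]).imK := by rw [hI]
  simp only [Quaternion.re_mul, Quaternion.imI_mul, Quaternion.imJ_mul, Quaternion.imK_mul] at h1 h2 h3 h4
  simp only [Quaternion.re_neg, Quaternion.imI_neg, Quaternion.imJ_neg, Quaternion.imK_neg,
    Quaternion.re_one, Quaternion.imI_one, Quaternion.imJ_one, Quaternion.imK_one, neg_zero] at h1 h2 h3 h4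
  constructor
  · nlinarith [sq_nonneg I.re, sq_nonneg I.imI, sq_nonneg I.imJ, sq_nonneg I.imK]
  · nlinarith [sq_nonneg I.re]

lemma symmAux_norm_liftAux {I : ℍ[ℝ]} (hI : I * I = -1) (z : ℂ) :
    ‖Complex.liftAux I hI z‖ = ‖z‖ := by
  obtain ⟨h0, h1⟩ := symmAux_pure_of_sq_neg_one hI
  have key : Quaternion.normSq (Complex.liftAux I hI z) = Complex.normSq z := by
    rw [Complex.liftAux_apply, Quaternion.normSq_def', Complex.normSq_apply]
    simp only [Quaternion.re_add, Quaternion.imI_add, Quaternion.imJ_add, Quaternion.imK_add,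
      Quaternion.algebraMap_def, Quaternion.re_coe, Quaternion.imI_coe, Quaternion.imJ_coe,
      Quaternion.imK_coe, Quaternion.re_smul, Quaternion.imI_smul, Quaternion.imJ_smul,
      Quaternion.imK_smul, smul_eq_mul, h0, mul_zero, add_zero, zero_add]
    nlinarith [h1]
  have hsq : ‖Complex.liftAux I hI z‖ ^ 2 = (‖z‖) ^ 2 := by
    rw [sq, sq, ← Quaternion.normSq_eq_norm_mul_self, key, ← Complex.sq_norm, sq]
  nlinarith [norm_nonneg (Complex.liftAux I hI z), norm_nonneg z]

def symmAuxI0 : ℍ[ℝ] := ⟨0, 1, 0, 0⟩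
def symmAuxJ0 : ℍ[ℝ] := ⟨0, 0, 1, 0⟩

lemma symmAux_hI0 : symmAuxI0 * symmAuxI0 = -1 := by
  ext <;> simp [Quaternion.re_mul, Quaternion.imI_mul, Quaternion.imJ_mul,
    Quaternion.imK_mul] <;> simp [symmAuxI0]

def symmAuxφ0 : ℂ →ₐ[ℝ] ℍ[ℝ] := Complex.liftAux symmAuxI0 symmAux_hI0

lemma symmAuxφ0_re (z : ℂ) : (symmAuxφ0 z).re = z.re := by
  simp [symmAuxφ0, Complex.liftAux_apply, Quaternion.algebraMap_def] <;> simp [symmAuxI0]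
lemma symmAuxφ0_imI (z : ℂ) : (symmAuxφ0 z).imI = z.im := by
  simp [symmAuxφ0, Complex.liftAux_apply, Quaternion.algebraMap_def] <;> simp [symmAuxI0]
lemma symmAuxφ0_imJ (z : ℂ) : (symmAuxφ0 z).imJ = 0 := by
  simp [symmAuxφ0, Complex.liftAux_apply, Quaternion.algebraMap_def] <;> simp [symmAuxI0]
lemma symmAuxφ0_imK (z : ℂ) : (symmAuxφ0 z).imK = 0 := by
  simp [symmAuxφ0, Complex.liftAux_apply, Quaternion.algebraMap_def] <;> simp [symmAuxI0]

lemma symmAux_norm_φ0 (z : ℂ) : ‖symmAuxφ0 z‖ = ‖z‖ :=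
  symmAux_norm_liftAux symmAux_hI0 z

lemma symmAux_decomp (u : ℍ[ℝ]) :
    u = symmAuxφ0 ⟨u.re, u.imI⟩ + symmAuxφ0 ⟨u.imJ, u.imK⟩ * symmAuxJ0 := by
  ext <;> simp [symmAuxφ0_re, symmAuxφ0_imI, symmAuxφ0_imJ, symmAuxφ0_imK,
    Quaternion.re_mul, Quaternion.imI_mul, Quaternion.imJ_mul, Quaternion.imK_mul] <;> simp [symmAuxJ0]

lemma symmAux_norm_sq_decomp (A B : ℂ) : ‖symmAuxφ0 A + symmAuxφ0 B * symmAuxJ0‖ ^ 2 =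
    ‖A‖ ^ 2 + ‖B‖ ^ 2 := by
  rw [sq, ← Quaternion.normSq_eq_norm_mul_self, Quaternion.normSq_def', Complex.sq_norm,
    Complex.sq_norm, Complex.normSq_apply, Complex.normSq_apply]
  simp [symmAuxφ0_re, symmAuxφ0_imI, symmAuxφ0_imJ, symmAuxφ0_imK,
    Quaternion.re_mul, Quaternion.imI_mul, Quaternion.imJ_mul, Quaternion.imK_mul]
  simp [symmAuxJ0]
  ring

lemma symmAux_eval_slice (N : ℕ) (a : ℕ → ℍ[ℝ]) (z : ℂ) :
    ‖∑ j ∈ range N, (symmAuxφ0 z) ^ j * a j‖ ^ 2 =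
      ‖∑ j ∈ range N, z ^ j * ⟨(a j).re, (a j).imI⟩‖ ^ 2 +
      ‖∑ j ∈ range N, z ^ j * ⟨(a j).imJ, (a j).imK⟩‖ ^ 2 := by
  have : ∑ j ∈ range N, (symmAuxφ0 z) ^ j * a j =
      symmAuxφ0 (∑ j ∈ range N, z ^ j * ⟨(a j).re, (a j).imI⟩) +
      symmAuxφ0 (∑ j ∈ range N, z ^ j * ⟨(a j).imJ, (a j).imK⟩) * symmAuxJ0 := by
    rw [map_sum, map_sum, Finset.sum_mul, ← Finset.sum_add_distrib]
    refine Finset.sum_congr rfl fun j _ => ?_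
    rw [map_mul, map_mul, map_pow, mul_assoc, ← mul_add, ← symmAux_decomp (a j)]
  rw [this, symmAux_norm_sq_decomp]

lemma symmAux_quat_real {x : ℍ[ℝ]} (h : star x = x) : x = ((x.re : ℝ) : ℍ[ℝ]) := by
  have h1 : (star x).imI = x.imI := by rw [h]
  have h2 : (star x).imJ = x.imJ := by rw [h]
  have h3 : (star x).imK = x.imK := by rw [h]
  simp only [Quaternion.imI_star, Quaternion.imJ_star, Quaternion.imK_star] at h1 h2 h3
  ext <;> simp [Quaternion.re_coe, Quaternion.imI_coe, Quaternion.imJ_coe, Quaternion.imK_coe] <;>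
    linarith

lemma symmAux_sum_reflect_star (a : ℕ → ℍ[ℝ]) (m : ℕ) :
    star (∑ k ∈ range (m + 1), a k * star (a (m - k))) =
      ∑ k ∈ range (m + 1), a k * star (a (m - k)) := by
  rw [star_sum]
  have : ∀ k ∈ range (m + 1),
      star (a k * star (a (m - k))) = a (m - k) * star (a (m - (m - k))) := by
    intro k hk
    rw [Finset.mem_range] at hk
    rw [star_mul, star_star, Nat.sub_sub_self (Nat.lt_succ_iff.mp hk)]
  rw [Finset.sum_congr rfl this]
  have := Finset.sum_range_reflect (fun k => a k * star (a (m - k))) (m + 1)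
  simpa using this

lemma symmAux_sum_reflect_conj (f g : ℕ → ℂ) (m : ℕ)
    (hfg : ∀ k, k ≤ m → (starRingEnd ℂ) (f k * g (m - k)) = f (m - k) * g k) :
    (starRingEnd ℂ) (∑ k ∈ range (m + 1), f k * g (m - k)) =
      ∑ k ∈ range (m + 1), f k * g (m - k) := by
  rw [map_sum]
  have h1 : ∀ k ∈ range (m + 1),
      (starRingEnd ℂ) (f k * g (m - k)) = f (m - k) * g (m - (m - k)) := by
    intro k hk
    rw [Finset.mem_range] at hk
    rw [hfg k (Nat.lt_succ_iff.mp hk), Nat.sub_sub_self (Nat.lt_succ_iff.mp hk)]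
  rw [Finset.sum_congr rfl h1]
  have := Finset.sum_range_reflect (fun k => f k * g (m - k)) (m + 1)
  simpa using this

lemma symmAux_cauchy (n : ℕ) (f g : ℕ → ℂ) (hf : ∀ j, n < j → f j = 0)
    (hg : ∀ j, n < j → g j = 0) (z : ℂ) :
    ∑ m ∈ range (2 * n + 1), z ^ m * (∑ k ∈ range (m + 1), f k * g (m - k)) =
      (∑ j ∈ range (n + 1), z ^ j * f j) * (∑ j ∈ range (n + 1), z ^ j * g j) := by
  set p : ℂ[X] := ∑ j ∈ range (n + 1), monomial j (f j) with hp
  set q : ℂ[X] := ∑ j ∈ range (n + 1), monomial j (g j) with hq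
  have hpc : ∀ j, p.coeff j = if j ≤ n then f j else 0 := by
    intro j
    rw [hp, Polynomial.finset_sum_coeff]
    simp only [Polynomial.coeff_monomial]
    rw [Finset.sum_ite_eq' (range (n+1)) j]
    simp [Nat.lt_succ_iff]
  have hqc : ∀ j, q.coeff j = if j ≤ n then g j else 0 := by
    intro j
    rw [hq, Polynomial.finset_sum_coeff]
    simp only [Polynomial.coeff_monomial]
    rw [Finset.sum_ite_eq' (range (n+1)) j]
    simp [Nat.lt_succ_iff]
  have hpc' : ∀ j, p.coeff j = f j := by
    intro j; rw [hpc]; split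
    · rfl
    · exact (hf j (by omega)).symm
  have hdp : p.natDegree ≤ n := by
    apply Polynomial.natDegree_sum_le_of_forall_le
    intro j hj
    exact (Polynomial.natDegree_monomial_le _).trans (Nat.lt_succ_iff.mp (Finset.mem_range.mp hj))
  have hdq : q.natDegree ≤ n := by
    apply Polynomial.natDegree_sum_le_of_forall_le
    intro j hj
    exact (Polynomial.natDegree_monomial_le _).trans (Nat.lt_succ_iff.mp (Finset.mem_range.mp hj))
  have hd : (p * q).natDegree < 2 * n + 1 :=
    Nat.lt_succ_of_le ((Polynomial.natDegree_mul_le).trans (by omega))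
  have heval := Polynomial.eval_eq_sum_range' hd z
  have hcoef : ∀ m, (p * q).coeff m = ∑ k ∈ range (m + 1), f k * g (m - k) := by
    intro m
    rw [Polynomial.coeff_mul, Finset.Nat.sum_antidiagonal_eq_sum_range_succ_mk]
    refine Finset.sum_congr rfl fun k _ => ?_
    rw [hpc', hqc]
    split
    · rfl
    · rw [hg (m - k) (by omega)]
  have hevalp : p.eval z = ∑ j ∈ range (n + 1), z ^ j * f j := by
    rw [hp, Polynomial.eval_finset_sum]
    exact Finset.sum_congr rfl fun j _ => by rw [Polynomial.eval_monomial]; ring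
  have hevalq : q.eval z = ∑ j ∈ range (n + 1), z ^ j * g j := by
    rw [hq, Polynomial.eval_finset_sum]
    exact Finset.sum_congr rfl fun j _ => by rw [Polynomial.eval_monomial]; ring
  calc ∑ m ∈ range (2 * n + 1), z ^ m * (∑ k ∈ range (m + 1), f k * g (m - k))
      = ∑ m ∈ range (2 * n + 1), (p * q).coeff m * z ^ m := by
        exact Finset.sum_congr rfl fun m _ => by rw [hcoef]; ring
    _ = (p * q).eval z := heval.symm
    _ = _ := by rw [Polynomial.eval_mul, hevalp, hevalq]

lemma symmAux_exists_slice (q : ℍ[ℝ]) :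
    ∃ (I : ℍ[ℝ]) (hI : I * I = -1) (z : ℂ), Complex.liftAux I hI z = q := by
  by_cases hpure : q.imI = 0 ∧ q.imJ = 0 ∧ q.imK = 0
  · refine ⟨symmAuxI0, symmAux_hI0, ⟨q.re, 0⟩, ?_⟩
    rw [Complex.liftAux_apply]
    ext <;> simp [Quaternion.algebraMap_def, hpure.1, hpure.2.1, hpure.2.2] <;> simp [symmAuxI0]
  · set y : ℝ := Real.sqrt (q.imI ^ 2 + q.imJ ^ 2 + q.imK ^ 2) with hy
    have hy2 : y ^ 2 = q.imI ^ 2 + q.imJ ^ 2 + q.imK ^ 2 := by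
      rw [hy]
      exact Real.sq_sqrt (by positivity)
    have hyne : y ≠ 0 := by
      intro h
      rw [h] at hy2
      apply hpure
      refine ⟨?_, ?_, ?_⟩ <;> nlinarith [sq_nonneg q.imI, sq_nonneg q.imJ, sq_nonneg q.imK]
    set I : ℍ[ℝ] := y⁻¹ • (⟨0, q.imI, q.imJ, q.imK⟩ : ℍ[ℝ]) with hI'
    have hI : I * I = -1 := by
      ext <;>
        simp only [Quaternion.re_mul, Quaternion.imI_mul, Quaternion.imJ_mul, Quaternion.imK_mul] <;>
        simp [hI', smul_eq_mul]
      · field_simp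
        nlinarith [hy2]
      all_goals ring
    refine ⟨I, hI, ⟨q.re, y⟩, ?_⟩
    rw [Complex.liftAux_apply]
    ext <;>
        simp only [Quaternion.re_add, Quaternion.imI_add, Quaternion.imJ_add, Quaternion.imK_add,
          Quaternion.re_smul, Quaternion.imI_smul, Quaternion.imJ_smul, Quaternion.imK_smul] <;>
        simp [hI', Quaternion.algebraMap_def, smul_smul, mul_inv_cancel₀ hyne] <;>
      field_simp

end SymmAux

/-- The symmetrization `P^s(q) = ∑_{m=0}^{2n} q^m c_m` of a quaternionic polynomial
`P(q) = ∑_{j=0}^n q^j a_j`, where `c_m = ∑_{k=0}^m a_k * conj(a_{m-k})`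
(with `a_j = 0` for `j > n`), satisfies
`max_{‖q‖ = R} ‖P^s(q)‖ ≤ (max_{‖q‖ = R} ‖P(q)‖)²` for every `R > 0`. -/
theorem symmetrization_max_le_sq (n : ℕ) (a : ℕ → ℍ[ℝ])
    (ha : ∀ j, n < j → a j = 0)
    (c : ℕ → ℍ[ℝ])
    (hc : ∀ m, c m = ∑ k ∈ Finset.range (m + 1), a k * star (a (m - k)))
    (R : ℝ) (hR : 0 < R) :
    sSup {y : ℝ | ∃ q : ℍ[ℝ], ‖q‖ = R ∧
        y = ‖∑ m ∈ Finset.range (2 * n + 1), q ^ m * c m‖} ≤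
      (sSup {y : ℝ | ∃ q : ℍ[ℝ], ‖q‖ = R ∧
        y = ‖∑ j ∈ Finset.range (n + 1), q ^ j * a j‖}) ^ 2 := by
  classical
  set S : Set ℝ := {y : ℝ | ∃ q : ℍ[ℝ], ‖q‖ = R ∧
      y = ‖∑ j ∈ Finset.range (n + 1), q ^ j * a j‖} with hS
  set M : ℝ := sSup S with hM
  -- S is bounded above
  have hbdd : BddAbove S := by
    refine ⟨∑ j ∈ Finset.range (n + 1), R ^ j * ‖a j‖, ?_⟩
    rintro y ⟨q, hq, rfl⟩
    calc ‖∑ j ∈ Finset.range (n + 1), q ^ j * a j‖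
        ≤ ∑ j ∈ Finset.range (n + 1), ‖q ^ j * a j‖ := norm_sum_le _ _
      _ = ∑ j ∈ Finset.range (n + 1), R ^ j * ‖a j‖ := by
          refine Finset.sum_congr rfl fun j _ => ?_
          rw [norm_mul, norm_pow, hq]
  have hMle : ∀ q : ℍ[ℝ], ‖q‖ = R →
      ‖∑ j ∈ Finset.range (n + 1), q ^ j * a j‖ ≤ M :=
    fun q hq => le_csSup hbdd ⟨q, hq, rfl⟩
  -- the complex coefficient functions
  set α : ℕ → ℂ := fun j => ⟨(a j).re, (a j).imI⟩ with hα
  set β : ℕ → ℂ := fun j => ⟨(a j).imJ, (a j).imK⟩ with hβ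
  have hα0 : ∀ j, n < j → α j = 0 := by
    intro j hj; rw [hα]; simp only; rw [ha j hj]; simp [Complex.ext_iff]
  have hβ0 : ∀ j, n < j → β j = 0 := by
    intro j hj; rw [hβ]; simp only; rw [ha j hj]; simp [Complex.ext_iff]
  have hα0' : ∀ j, n < j → (starRingEnd ℂ) (α j) = 0 := fun j hj => by
    rw [hα0 j hj]; simp
  have hβ0' : ∀ j, n < j → (starRingEnd ℂ) (β j) = 0 := fun j hj => by
    rw [hβ0 j hj]; simp
  -- the complexified symmetrized coefficients
  set c' : ℕ → ℂ := fun m =>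
    (∑ k ∈ Finset.range (m + 1), α k * (starRingEnd ℂ) (α (m - k))) +
    (∑ k ∈ Finset.range (m + 1), β k * (starRingEnd ℂ) (β (m - k))) with hc'
  -- c m is the real number (c' m).re
  have hre : ∀ m, c m = (((c' m).re : ℝ) : ℍ[ℝ]) := by
    intro m
    have h1 : c m = (((c m).re : ℝ) : ℍ[ℝ]) := by
      apply symmAux_quat_real
      rw [hc]
      exact symmAux_sum_reflect_star a m
    have h2 : (c m).re = (c' m).re := by
      rw [hc, hc']
      have hsum : (∑ k ∈ Finset.range (m + 1), a k * star (a (m - k))).re =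
          ∑ k ∈ Finset.range (m + 1), (a k * star (a (m - k))).re :=
        map_sum (show ℍ[ℝ] →ₗ[ℝ] ℝ from QuaternionAlgebra.reₗ _ _ _) _ _
      rw [hsum]
      simp only [Complex.add_re, Complex.re_sum, hα, hβ]
      rw [← Finset.sum_add_distrib]
      refine Finset.sum_congr rfl fun k _ => ?_
      simp [Quaternion.re_mul, Complex.mul_re]
      ring
    rw [h1, h2]
  -- c' m is real
  have hc'real : ∀ m, c' m = (((c' m).re : ℝ) : ℂ) := by
    intro m
    have hconj : (starRingEnd ℂ) (c' m) = c' m := by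
      rw [hc', map_add]
      congr 1
      · exact symmAux_sum_reflect_conj α (fun j => (starRingEnd ℂ) (α j)) m
          (fun k hk => by simp [mul_comm])
      · exact symmAux_sum_reflect_conj β (fun j => (starRingEnd ℂ) (β j)) m
          (fun k hk => by simp [mul_comm])
    exact (Complex.conj_eq_iff_re.mp hconj).symm
  -- M is nonnegative
  have hM0 : 0 ≤ M := by
    refine le_trans (norm_nonneg _) (hMle ((R : ℝ) : ℍ[ℝ]) ?_)
    rw [Quaternion.norm_coe, Real.norm_eq_abs, abs_of_pos hR]
  -- pointwise bound
  have key : ∀ q : ℍ[ℝ], ‖q‖ = R →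
      ‖∑ m ∈ Finset.range (2 * n + 1), q ^ m * c m‖ ≤ M ^ 2 := by
    intro q hq
    obtain ⟨I, hI, z, hz⟩ := symmAux_exists_slice q
    have habsz : ‖z‖ = R := by
      rw [← hq, ← hz, symmAux_norm_liftAux]
    -- rewrite the symmetrized polynomial through the slice
    have hval : ∑ m ∈ Finset.range (2 * n + 1), q ^ m * c m =
        Complex.liftAux I hI (∑ m ∈ Finset.range (2 * n + 1), z ^ m * c' m) := by
      rw [map_sum]
      refine Finset.sum_congr rfl fun m _ => ?_
      rw [map_mul, map_pow, hz, hre m]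
      congr 1
      have hlift : Complex.liftAux I hI (c' m) = (((c' m).re : ℝ) : ℍ[ℝ]) := by
        conv_lhs => rw [hc'real m]
        rw [show ((((c' m).re : ℝ)) : ℂ) = algebraMap ℝ ℂ ((c' m).re) from rfl,
          AlgHom.commutes, Quaternion.algebraMap_def]
      exact hlift.symm
    have hnorm : ‖∑ m ∈ Finset.range (2 * n + 1), q ^ m * c m‖ =
        ‖∑ m ∈ Finset.range (2 * n + 1), z ^ m * c' m‖ := by
      rw [hval, symmAux_norm_liftAux]
    -- split the complex sum as a product via the Cauchy identity
    have hsplit : ∑ m ∈ Finset.range (2 * n + 1), z ^ m * c' m =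
        (∑ j ∈ Finset.range (n + 1), z ^ j * α j) *
          (∑ j ∈ Finset.range (n + 1), z ^ j * (starRingEnd ℂ) (α j)) +
        (∑ j ∈ Finset.range (n + 1), z ^ j * β j) *
          (∑ j ∈ Finset.range (n + 1), z ^ j * (starRingEnd ℂ) (β j)) := by
      rw [hc']
      simp_rw [mul_add]
      rw [Finset.sum_add_distrib,
        symmAux_cauchy n α (fun j => (starRingEnd ℂ) (α j)) hα0 hα0' z,
        symmAux_cauchy n β (fun j => (starRingEnd ℂ) (β j)) hβ0 hβ0' z]
    set A₁ : ℂ := ∑ j ∈ Finset.range (n + 1), z ^ j * α j with hA₁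
    set B₁ : ℂ := ∑ j ∈ Finset.range (n + 1), z ^ j * β j with hB₁
    set A₂ : ℂ := ∑ j ∈ Finset.range (n + 1), z ^ j * (starRingEnd ℂ) (α j) with hA₂
    set B₂ : ℂ := ∑ j ∈ Finset.range (n + 1), z ^ j * (starRingEnd ℂ) (β j) with hB₂
    -- the two sphere points
    set w₁ : ℍ[ℝ] := symmAuxφ0 z with hw₁
    set w₂ : ℍ[ℝ] := symmAuxφ0 ((starRingEnd ℂ) z) with hw₂
    have hnw₁ : ‖w₁‖ = R := by rw [hw₁, symmAux_norm_φ0, habsz]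
    have hnw₂ : ‖w₂‖ = R := by
      rw [hw₂, symmAux_norm_φ0, Complex.norm_conj, habsz]
    set t₁ : ℝ := ‖∑ j ∈ Finset.range (n + 1), w₁ ^ j * a j‖ with ht₁
    set t₂ : ℝ := ‖∑ j ∈ Finset.range (n + 1), w₂ ^ j * a j‖ with ht₂
    have ht₁M : t₁ ≤ M := hMle w₁ hnw₁
    have ht₂M : t₂ ≤ M := hMle w₂ hnw₂
    have hsq₁ : t₁ ^ 2 = ‖A₁‖ ^ 2 + ‖B₁‖ ^ 2 := by
      rw [ht₁, hw₁, symmAux_eval_slice, hA₁, hB₁, hα, hβ]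
    have hsq₂ : t₂ ^ 2 = ‖A₂‖ ^ 2 + ‖B₂‖ ^ 2 := by
      rw [ht₂, hw₂, symmAux_eval_slice]
      congr 2
      · rw [hA₂, ← Complex.norm_conj, map_sum]
        congr 1
        refine Finset.sum_congr rfl fun j _ => ?_
        rw [map_mul, map_pow, Complex.conj_conj, hα]
      · rw [hB₂, ← Complex.norm_conj, map_sum]
        congr 1
        refine Finset.sum_congr rfl fun j _ => ?_
        rw [map_mul, map_pow, Complex.conj_conj, hβ]
    -- Cauchy–Schwarz step
    have habs : ‖A₁ * A₂ + B₁ * B₂‖ ≤ t₁ * t₂ := by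
      have h1 : ‖A₁ * A₂ + B₁ * B₂‖ ≤
          ‖A₁‖ * ‖A₂‖ + ‖B₁‖ * ‖B₂‖ := by
        refine (norm_add_le _ _).trans ?_
        rw [norm_mul, norm_mul]
      have h2 : (‖A₁‖ * ‖A₂‖ + ‖B₁‖ * ‖B₂‖) ^ 2 ≤
          (t₁ * t₂) ^ 2 := by
        have := sq_nonneg (‖A₁‖ * ‖B₂‖ - ‖B₁‖ * ‖A₂‖)
        nlinarith [hsq₁, hsq₂]
      have h3 : 0 ≤ ‖A₁‖ * ‖A₂‖ + ‖B₁‖ * ‖B₂‖ := by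
        positivity
      have h4 : 0 ≤ t₁ * t₂ := mul_nonneg (norm_nonneg _) (norm_nonneg _)
      nlinarith
    calc ‖∑ m ∈ Finset.range (2 * n + 1), q ^ m * c m‖
        = ‖A₁ * A₂ + B₁ * B₂‖ := by rw [hnorm, hsplit]
      _ ≤ t₁ * t₂ := habs
      _ ≤ M * M := mul_le_mul ht₁M ht₂M (norm_nonneg _) hM0
      _ = M ^ 2 := (sq M).symm
  -- conclude
  refine Real.sSup_le ?_ (by positivity)
  rintro y ⟨q, hq, rfl⟩
  exact key q hq
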